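/- Suppose E satisfies the Palais–Smale condition, and let {X_N}_{N≥0} be a sequence of closed subspaces of X with X_0 ⊆ X_1 ⊆ ⋯ whose union is dense in X. Let σ : ℕ → (0,∞) satisfy σ(N) → 0 as N → ∞, and for each N let w_N ∈ X_N satisfy ‖R_N(w_N)‖ ≤ σ(N). Assume that {E(w_N)} is bounded in ℝ and that for every infinite subset J ⊆ ℕ the sequence {E'(w_N)}_{N∈J} has a subsequence converging in X*. Then inf_{y∈C_E} ‖w_N − y‖ → 0 as N → ∞, where C_E = {w ∈ X : E'(w) = 0} is the set of critical points of E. -/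

import Mathlib

open Filter
open scoped RealInnerProductSpace

/-- **Theorem (II) of the LMMG convergence analysis**: if the final approximations `w_N` on a
dense nested family of closed subspaces have discrete residuals bounded by `σ(N) → 0`, the
energies `E(w_N)` are bounded, and every infinite subfamily of `{E'(w_N)}` has a convergent
subsequence in `X*`, then `w_N` converges to the set of critical points of `E`. -/
theorem lmmg_convergence_adaptive_enrichment
    {X : Type*} [NormedAddCommGroup X] [InnerProductSpace ℝ X] [CompleteSpace X]
    (E : X → ℝ) (E' : X → X →L[ℝ] ℝ)
    (hE : ∀ x, HasFDerivAt E (E' x) x) (hE' : Continuous E')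
    (PS : ∀ u : ℕ → X, (∃ M : ℝ, ∀ k, |E (u k)| ≤ M) →
      Tendsto (fun k => ‖E' (u k)‖) atTop (nhds 0) →
      ∃ φ : ℕ → ℕ, StrictMono φ ∧ ∃ x : X, Tendsto (u ∘ φ) atTop (nhds x))
    (XN : ℕ → Submodule ℝ X)
    (hclosed : ∀ N, IsClosed ((XN N : Set X)))
    (hmono : ∀ N, XN N ≤ XN (N + 1))
    (hdense : Dense (⋃ N, (XN N : Set X)))
    (σ : ℕ → ℝ) (hσpos : ∀ N, 0 < σ N)
    (hσ : Tendsto σ atTop (nhds 0))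
    (w : ℕ → X) (hwmem : ∀ N, w N ∈ XN N)
    (R : ℕ → X → X)
    (hRmem : ∀ N, ∀ x : X, R N x ∈ XN N)
    (hR : ∀ N, ∀ x : X, ∀ v ∈ XN N, ⟪R N x, v⟫ = E' x v)
    (hres : ∀ N, ‖R N (w N)‖ ≤ σ N)
    (hEbdd : ∃ M : ℝ, ∀ N, |E (w N)| ≤ M)
    (hsub : ∀ J : Set ℕ, J.Infinite →
      ∃ φ : ℕ → ℕ, StrictMono φ ∧ (∀ n, φ n ∈ J) ∧
        ∃ glim : X →L[ℝ] ℝ, Tendsto (fun n => E' (w (φ n))) atTop (nhds glim)) :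
    Tendsto (fun N => Metric.infDist (w N) {y : X | E' y = 0}) atTop (nhds 0) := by
  have hmono' : Monotone XN := monotone_nat_of_le_succ hmono
  -- Step 1: E'(w N) → 0 in X*
  have hEnorm : Tendsto (fun N => E' (w N)) atTop (nhds 0) := by
    apply tendsto_of_subseq_tendsto
    intro ns hns
    have hJ : (Set.range ns).Infinite := by
      intro hfin
      obtain ⟨b, hb⟩ := hfin.bddAbove
      obtain ⟨n, hn⟩ := (hns.eventually (eventually_ge_atTop (b + 1))).exists
      have := hb (Set.mem_range_self n)
      omega
    obtain ⟨φ, hφmono, hφmem, glim, hglim⟩ := hsub _ hJ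
    have hg0 : glim = 0 := by
      have hker : (⋃ N, (XN N : Set X)) ⊆ {v : X | glim v = 0} := by
        rintro v hv
        obtain ⟨_, ⟨M, rfl⟩, hvM⟩ := hv
        have h1 : Tendsto (fun n => E' (w (φ n)) v) atTop (nhds (glim v)) :=
          ((ContinuousLinearMap.apply ℝ ℝ v).continuous.tendsto glim).comp hglim
        have h2 : Tendsto (fun n => E' (w (φ n)) v) atTop (nhds 0) := by
          refine squeeze_zero_norm' (a := fun n => σ (φ n) * ‖v‖) ?_ ?_
          · filter_upwards [eventually_ge_atTop M] with n hn
            have hvmem : v ∈ XN (φ n) := hmono' (le_trans hn (hφmono.le_apply)) hvM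
            have : E' (w (φ n)) v = ⟪R (φ n) (w (φ n)), v⟫ := (hR _ _ v hvmem).symm
            rw [Real.norm_eq_abs, this]
            calc |⟪R (φ n) (w (φ n)), v⟫| ≤ ‖R (φ n) (w (φ n))‖ * ‖v‖ :=
                  abs_real_inner_le_norm _ _
              _ ≤ σ (φ n) * ‖v‖ := by
                  exact mul_le_mul_of_nonneg_right (hres _) (norm_nonneg _)
          · have := (hσ.comp hφmono.tendsto_atTop).mul_const ‖v‖
            simpa using this
        exact tendsto_nhds_unique h1 h2
      have hclosedker : IsClosed {v : X | glim v = 0} :=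
        isClosed_eq (glim.continuous) continuous_const
      have huniv : {v : X | glim v = 0} = Set.univ := by
        have := hclosedker.closure_subset_iff.mpr hker
        rw [hdense.closure_eq] at this
        exact Set.eq_univ_of_univ_subset this
      ext v
      have : v ∈ {v : X | glim v = 0} := huniv ▸ Set.mem_univ v
      simpa using this
    refine ⟨fun n => (hφmem n).choose, ?_⟩
    have heq : (fun n => E' (w (ns ((hφmem n).choose)))) = fun n => E' (w (φ n)) := by
      funext n
      rw [(hφmem n).choose_spec]
    rw [heq]
    exact hg0 ▸ hglim
  have hEnormT : Tendsto (fun N => ‖E' (w N)‖) atTop (nhds 0) := by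
    have := (continuous_norm.tendsto (0 : X →L[ℝ] ℝ)).comp hEnorm
    simpa [Function.comp_def] using this
  -- Step 2
  apply tendsto_of_subseq_tendsto
  intro ns hns
  obtain ⟨M, hM⟩ := hEbdd
  obtain ⟨φ, hφmono, x, hx⟩ := PS (w ∘ ns) ⟨M, fun k => hM (ns k)⟩ (hEnormT.comp hns)
  have hnsφ : Tendsto (ns ∘ φ) atTop atTop := hns.comp hφmono.tendsto_atTop
  have hxcrit : E' x = 0 := by
    have h1 : Tendsto (fun k => E' (w (ns (φ k)))) atTop (nhds (E' x)) :=
      (hE'.tendsto x).comp hx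
    have h2 : Tendsto (fun k => E' (w (ns (φ k)))) atTop (nhds 0) := hEnorm.comp hnsφ
    exact tendsto_nhds_unique h1 h2
  refine ⟨φ, ?_⟩
  apply squeeze_zero (fun n => Metric.infDist_nonneg)
    (fun n => Metric.infDist_le_dist_of_mem (s := {y : X | E' y = 0}) hxcrit)
  exact tendsto_iff_dist_tendsto_zero.mp hx
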